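/- arXiv:2207.09151 — 8 statements merged into one kernel-verified Lean document; each statement's English description precedes it below -/
import Mathlib

section
/- Let G be a permutation group acting on an infinite set X that separates X. Then for every finite subset Y ⊂ X, every orbit of the pointwise stabilizer stab_G(Y) on X \ Y is infinite. -/
/-- If a permutation group `G` acting on an infinite set `X` separates `X`
(for every finite `Y ⊂ X` the pointwise stabilizer of `Y` fixes no point outside `Y`),
then for every finite `Y ⊂ X` every orbit of the pointwise stabilizer of `Y` on
`X \ Y` is infinite. -/
theorem stmt1 {G X : Type*} [Group G] [MulAction G X] [Infinite X]
    (hsep : ∀ Y : Set X, Y.Finite → ∀ p ∉ Y,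
      ∃ g : G, (∀ y ∈ Y, g • y = y) ∧ g • p ≠ p) :
    ∀ Y : Set X, Y.Finite → ∀ p ∉ Y,
      Set.Infinite {x : X | ∃ g : G, (∀ y ∈ Y, g • y = y) ∧ g • p = x} := by
  intro Y hY p hp
  by_contra hfin
  rw [Set.not_infinite] at hfin
  set S := {x : X | ∃ g : G, (∀ y ∈ Y, g • y = y) ∧ g • p = x} with hS
  obtain ⟨g, hg1, hg2⟩ := hsep (Y ∪ (S \ {p})) (hY.union hfin.diff) p
    (by simp [hp])
  have hq : g • p ∈ S \ {p} := ⟨⟨g, fun y hy => hg1 y (Or.inl hy), rfl⟩, hg2⟩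
  have h2 := hg1 (g • p) (Or.inr hq)
  exact hg2 (smul_left_cancel g h2)
end

section
/- For a group G of homeomorphisms of a Hausdorff space X that hereditarily separates X, and for any open infinite subset Z ⊆ X, every orbit of the action of the pointwise stabilizer stab_G(X \ Z) on Z \ Fix(G) is infinite. -/
/-- For a group `G` acting by homeomorphisms on a Hausdorff space `X`
with finite fixed-point set `Fix(G)`, if `G` hereditarily separates `X` then for any
open infinite `Z ⊆ X`, every orbit of the pointwise stabilizer of `X \ Z` on
`Z \ Fix(G)` is infinite. -/
theorem stmt5 {G X : Type*} [Group G] [MulAction G X] [TopologicalSpace X] [T2Space X]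
    (hcont : ∀ g : G, Continuous fun x : X => g • x)
    (hfix : Set.Finite {x : X | ∀ g : G, g • x = x})
    (hher : ∀ Z : Set X, IsOpen Z → Z.Infinite →
      ∀ Y : Set X, Y.Finite → Y ⊆ Z →
        ∀ p ∈ Z, p ∉ Y → p ∉ {x : X | ∀ g : G, g • x = x} →
          ∃ g : G, (∀ x, x ∉ Z → g • x = x) ∧ (∀ x ∈ Y, g • x = x) ∧ g • p ≠ p) :
    ∀ Z : Set X, IsOpen Z → Z.Infinite →
      ∀ p ∈ Z, p ∉ {x : X | ∀ g : G, g • x = x} →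
        Set.Infinite {x : X | ∃ g : G, (∀ y, y ∉ Z → g • y = y) ∧ g • p = x} := by
  intro Z hZopen hZinf p hpZ hpfix
  set O := {x : X | ∃ g : G, (∀ y, y ∉ Z → g • y = y) ∧ g • p = x} with hO
  -- orbit is contained in Z
  have hOZ : O ⊆ Z := by
    rintro x ⟨g, hg, rfl⟩
    by_contra hx
    have : g⁻¹ • (g • p) = g • p := by
      have := hg (g • p) hx
      calc g⁻¹ • (g • p) = g⁻¹ • (g • (g • p)) := by rw [this]
        _ = g • p := by simp
    have hp : p = g • p := by simpa using this
    rw [← hp] at hx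
    exact hx hpZ
  by_contra hfin
  rw [Set.not_infinite] at hfin
  have hYfin : (O \ {p}).Finite := hfin.diff
  have hYZ : O \ {p} ⊆ Z := fun x hx => hOZ hx.1
  obtain ⟨g, hg1, hg2, hg3⟩ := hher Z hZopen hZinf (O \ {p}) hYfin hYZ p hpZ
    (fun h => h.2 rfl) hpfix
  have hq : g • p ∈ O := ⟨g, hg1, rfl⟩
  have hqY : g • p ∈ O \ {p} := ⟨hq, hg3⟩
  have := hg2 (g • p) hqY
  -- g • (g • p) = g • p ⇒ g • p = p
  have : g • p = p := by
    have h := congrArg (fun z => g⁻¹ • z) this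
    simpa using h
  exact hg3 this
end

section
/- Every weakly branch group G acting on a rooted tree T hereditarily separates the boundary ∂T: for every open Z ⊆ ∂T, finite Y ⊂ Z and x ∈ Z \ Y, there exists g ∈ G fixing (∂T \ Z) ∪ Y pointwise with g(x) ≠ x. -/
/-- A permutation of the boundary `∂T = Π n, a n` of a spherically homogeneous rooted
tree (vertices at level `k` are elements of `Π i : Fin k, a i`) is tree-automorphism
like if it preserves lengths of common prefixes of rays. -/
def TreeAutLike {a : ℕ → Type*} (g : Equiv.Perm (∀ n, a n)) : Prop :=
  ∀ x y : (∀ n, a n), ∀ k : ℕ,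
    (∀ i < k, x i = y i) ↔ (∀ i < k, g x i = g y i)

/-- `G` acts spherically transitively: it is transitive on each level of the tree. -/
def SphericallyTransitive {a : ℕ → Type*} (G : Subgroup (Equiv.Perm (∀ n, a n))) : Prop :=
  ∀ (k : ℕ) (u v : ∀ i : Fin k, a i), ∃ g ∈ G,
    ∀ x : ∀ n, a n, (∀ i : Fin k, x i = u i) → (∀ i : Fin k, g x i = v i)

/-- Every rigid vertex stabilizer contains a non-trivial element (weakly branch). -/
def RigidStabilizersNontrivial {a : ℕ → Type*} (G : Subgroup (Equiv.Perm (∀ n, a n))) : Prop :=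
  ∀ (k : ℕ) (t : ∀ i : Fin k, a i), ∃ g ∈ G,
    (∀ x : ∀ n, a n, ¬ (∀ i : Fin k, x i = t i) → g x = x) ∧ g ≠ 1

/-- A weakly branch group `G` acting on a rooted tree `T` hereditarily
separates the boundary `∂T` (with its natural product/cylinder topology): for every
open `Z ⊆ ∂T`, finite `Y ⊂ Z` and `x ∈ Z \ Y` there is `g ∈ G` fixing
`(∂T \ Z) ∪ Y` pointwise with `g(x) ≠ x`. -/
theorem stmt7 {a : ℕ → Type*} [∀ n, TopologicalSpace (a n)] [∀ n, DiscreteTopology (a n)]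
    (hne : ∀ n, Nonempty (a n))
    (G : Subgroup (Equiv.Perm (∀ n, a n)))
    (haut : ∀ g ∈ G, TreeAutLike g)
    (hst : SphericallyTransitive G)
    (hwb : RigidStabilizersNontrivial G) :
    ∀ Z : Set (∀ n, a n), IsOpen Z →
      ∀ Y : Set (∀ n, a n), Y.Finite → Y ⊆ Z →
        ∀ x ∈ Z, x ∉ Y →
          ∃ g ∈ G, (∀ y, y ∉ Z → g y = y) ∧ (∀ y ∈ Y, g y = y) ∧ g x ≠ x := by
  intro Z hZ Y hYfin hYZ x hxZ hxY
  -- get a basic cylinder around x inside Z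
  obtain ⟨I, u, hu, hsub⟩ := (isOpen_pi_iff.mp hZ) x hxZ
  -- an index where each y ∈ Y differs from x
  have hdiff : ∀ y ∈ Y, ∃ i, y i ≠ x i := by
    intro y hy
    by_contra h
    push_neg at h
    exact hxY (by rwa [show y = x from funext h] at hy)
  classical
  set d : (∀ n, a n) → ℕ := fun y => if h : ∃ i, y i ≠ x i then h.choose else 0 with hd
  set k : ℕ := max (I.sup id + 1) (hYfin.toFinset.sup d + 1) with hk
  have hIk : ∀ i ∈ I, i < k := fun i hi =>
    lt_of_lt_of_le (Nat.lt_succ_of_le (Finset.le_sup (f := id) hi)) (le_max_left _ _)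
  have hCZ : ∀ z : (∀ n, a n), (∀ i < k, z i = x i) → z ∈ Z := by
    intro z hz
    apply hsub
    intro i hi
    rw [hz i (hIk i hi)]
    exact (hu i hi).2
  have hYC : ∀ y ∈ Y, ∃ i < k, y i ≠ x i := by
    intro y hy
    refine ⟨d y, ?_, ?_⟩
    · exact lt_of_lt_of_le
        (Nat.lt_succ_of_le (Finset.le_sup (f := d) (hYfin.mem_toFinset.mpr hy)))
        (le_max_right _ _)
    · rw [hd]
      simp only
      rw [dif_pos (hdiff y hy)]
      exact (hdiff y hy).choose_spec
  -- nontrivial element of rigid stabilizer at x|k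
  obtain ⟨h, hhG, hhsupp, hhne⟩ := hwb k (fun i => x i)
  -- h moves some ray w
  obtain ⟨w, hw⟩ : ∃ w, h w ≠ w := by
    by_contra hc
    push_neg at hc
    exact hhne (Equiv.ext hc)
  have hwC : ∀ i : Fin k, w i = x i := by
    by_contra hc
    exact hw (hhsupp w hc)
  have hhwC : ∀ i : Fin k, h w i = x i := by
    by_contra hc
    have h1 : h (h w) = h w := hhsupp (h w) hc
    exact hw (h.injective h1)
  obtain ⟨m, hm⟩ : ∃ m, h w m ≠ w m := by
    by_contra hc
    push_neg at hc
    exact hw (funext hc)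
  have hkm : k ≤ m := by
    by_contra hc
    push_neg at hc
    exact hm ((hhwC ⟨m, hc⟩).trans (hwC ⟨m, hc⟩).symm)
  set n : ℕ := m + 1 with hn
  -- conjugating element
  obtain ⟨f, hfG, hf⟩ := hst n (fun i => x i) (fun i => w i)
  have hfx : ∀ i : Fin n, f x i = w i := hf x (fun i => rfl)
  refine ⟨f⁻¹ * h * f, G.mul_mem (G.mul_mem (G.inv_mem hfG) hhG) hfG, ?_, ?_, ?_⟩
  · -- fixes complement of Z
    intro z hz
    have hzC : ¬ (∀ i < k, z i = x i) := fun hc => hz (hCZ z hc)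
    have hfz : ¬ (∀ i < k, f z i = f x i) := fun hc =>
      hzC (((haut f hfG) z x k).mpr hc)
    have hfzC : ¬ (∀ i : Fin k, f z i = x i) := by
      intro hc
      apply hfz
      intro i hi
      rw [hc ⟨i, hi⟩, hfx ⟨i, by omega⟩]
      exact (hwC ⟨i, hi⟩).symm
    have : h (f z) = f z := hhsupp (f z) hfzC
    simp [Equiv.Perm.mul_apply, this]
  · -- fixes Y
    intro y hy
    obtain ⟨i, hik, hiy⟩ := hYC y hy
    have hzC : ¬ (∀ i < k, y i = x i) := fun hc => hiy (hc i hik)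
    have hfz : ¬ (∀ i < k, f y i = f x i) := fun hc =>
      hzC (((haut f hfG) y x k).mpr hc)
    have hfzC : ¬ (∀ i : Fin k, f y i = x i) := by
      intro hc
      apply hfz
      intro i hi
      rw [hc ⟨i, hi⟩, hfx ⟨i, lt_of_lt_of_le hi (by omega)⟩]
      exact (hwC ⟨i, hi⟩).symm
    have : h (f y) = f y := hhsupp (f y) hfzC
    simp [Equiv.Perm.mul_apply, this]
  · -- moves x
    intro hc
    have h1 : h (f x) = f x := by
      have := congrArg f hc
      simpa [Equiv.Perm.mul_apply] using this
    have h2 : ∀ i < n, f x i = w i := fun i hi => hfx ⟨i, hi⟩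
    have h3 : ∀ i < n, h (f x) i = h w i := ((haut h hhG) (f x) w n).mp h2
    have h4 : h (f x) m = h w m := h3 m (Nat.lt_succ_self m)
    rw [h1, hfx ⟨m, Nat.lt_succ_self m⟩] at h4
    exact hm h4.symm
end

section
/- In a weakly branch group G on a rooted tree T, for every vertex t the rigid stabilizer R of t does not fix any infinite ray passing through t; i.e., for every boundary point x ∈ ∂T whose ray contains t, there exists g ∈ R with g(x) ≠ x. -/
/-- In a weakly branch group `G` on a rooted tree `T`, for every vertex
`t` the rigid stabilizer of `t` fixes no infinite ray through `t`: for every boundary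
point `x` whose ray passes through `t` there is `g` in the rigid stabilizer of `t`
(inside `G`) with `g(x) ≠ x`. -/
theorem stmt8 {a : ℕ → Type*} (hne : ∀ n, Nonempty (a n))
    (G : Subgroup (Equiv.Perm (∀ n, a n)))
    (haut : ∀ g ∈ G, TreeAutLike g)
    (hst : SphericallyTransitive G)
    (hwb : RigidStabilizersNontrivial G) :
    ∀ (k : ℕ) (t : ∀ i : Fin k, a i) (x : ∀ n, a n),
      (∀ i : Fin k, x i = t i) →
        ∃ g ∈ G, (∀ y : ∀ n, a n, ¬ (∀ i : Fin k, y i = t i) → g y = y) ∧ g x ≠ x := by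
  intro k t x hx
  obtain ⟨r, hrG, hsupp, hr1⟩ := hwb k t
  -- r moves some ray z
  have : ∃ z : (∀ n, a n), r z ≠ z := by
    by_contra hc
    push_neg at hc
    exact hr1 (Equiv.ext hc)
  obtain ⟨z, hz⟩ := this
  -- z passes through t
  have hzt : ∀ i : Fin k, z i = t i := by
    by_contra hc
    exact hz (hsupp z hc)
  -- a coordinate where r moves z
  have : ∃ n, r z n ≠ z n := by
    by_contra hc
    push_neg at hc
    exact hz (funext hc)
  obtain ⟨n, hn⟩ := this
  set m := max (n + 1) k with hm
  have hkm : k ≤ m := le_max_right _ _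
  have hnm : n < m := lt_of_lt_of_le (Nat.lt_succ_self n) (le_max_left _ _)
  -- transitivity: map the prefix of x of length m to the prefix of z of length m
  obtain ⟨h, hhG, hh⟩ := hst m (fun i => x i) (fun i => z i)
  have hhx : ∀ i : Fin m, h x i = z i := hh x (fun i => rfl)
  refine ⟨h⁻¹ * r * h, mul_mem (mul_mem (inv_mem hhG) hrG) hhG, ?_, ?_⟩
  · -- fixes rays not through t
    intro y hy
    have hyt : ¬ (∀ i : Fin k, h y i = t i) := by
      intro hcon
      apply hy
      intro i
      have hiff := haut h hhG x y k
      have : ∀ i < k, x i = y i := by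
        apply hiff.mpr
        intro j hj
        have h1 : h x j = z (⟨j, lt_of_lt_of_le hj hkm⟩ : Fin m).val := hhx ⟨j, lt_of_lt_of_le hj hkm⟩
        have h2 : z j = t ⟨j, hj⟩ := hzt ⟨j, hj⟩
        have h3 : h y j = t ⟨j, hj⟩ := hcon ⟨j, hj⟩
        simp only at h1
        rw [h1, h2, h3]
      have := this i.val i.isLt
      rw [← this]
      exact hx i
    have hfix : r (h y) = h y := hsupp (h y) hyt
    show h⁻¹ (r (h y)) = y
    rw [hfix]
    simp
  · -- moves x
    intro hcon
    have hgx : h⁻¹ (r (h x)) = x := hcon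
    have hrhx : r (h x) = h x := by
      have := congrArg h hgx
      simpa using this
    -- but r (h x) agrees with r z on first m coords, and r z n ≠ z n
    have hagree : ∀ i < m, r (h x) i = r z i := by
      apply (haut r hrG (h x) z m).mp
      intro i hi
      exact hhx ⟨i, hi⟩
    have h1 : r (h x) n = r z n := hagree n hnm
    have h2 : h x n = z n := hhx ⟨n, hnm⟩
    rw [hrhx, h2] at h1
    exact hn h1.symm
end

section
/- Let G act by homeomorphisms on a Hausdorff space X and let w = u_n v_n ⋯ u_1 v_1 be a word with constants v_1,…,v_n ∈ G \ {1}. Suppose q ∈ X belongs to a set of the form v_r^{ε_r}⋯v_1^{ε_1}(O') and q avoids ⋃ V_w(cl(O') \ O'), where V_w(A) is the (finite) collection of all sets v_j^{ε_j}⋯v_1^{ε_1}(A) with ε_i ∈ {0,1}. Then there is an open neighbourhood O ⊆ v_r^{ε_r}⋯v_1^{ε_1}(O') of q such that for every V ∈ V_w(O'), if O ∩ V ≠ ∅ then O ⊆ V. -/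
/-- `chainE v ε j` is the composition `v_j^{ε_j} ∘ ⋯ ∘ v_1^{ε_1}` of homeomorphisms,
where `v^1 = v` and `v^0 = id`. -/
def chainE {X : Type*} [TopologicalSpace X] (v : ℕ → X ≃ₜ X) (ε : ℕ → Bool) :
    ℕ → X → X
  | 0 => id
  | j + 1 => (fun x => if ε (j + 1) then v (j + 1) x else x) ∘ chainE v ε j

/-- Homeomorphism version of `chainE`. -/
def chainH {X : Type*} [TopologicalSpace X] (v : ℕ → X ≃ₜ X) (ε : ℕ → Bool) :
    ℕ → X ≃ₜ X
  | 0 => Homeomorph.refl X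
  | j + 1 => (chainH v ε j).trans (if ε (j + 1) then v (j + 1) else Homeomorph.refl X)

lemma chainE_eq {X : Type*} [TopologicalSpace X] (v : ℕ → X ≃ₜ X) (ε : ℕ → Bool) :
    ∀ j, chainE v ε j = ⇑(chainH v ε j) := by
  intro j
  induction j with
  | zero => rfl
  | succ j ih =>
    funext x
    simp only [chainE, chainH, Function.comp, ih, Homeomorph.trans_apply]
    split_ifs <;> simp

lemma chainE_congr {X : Type*} [TopologicalSpace X] (v : ℕ → X ≃ₜ X)
    (ε ε' : ℕ → Bool) : ∀ j, (∀ i, i ≤ j → ε i = ε' i) →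
    chainE v ε j = chainE v ε' j := by
  intro j
  induction j with
  | zero => intro _; rfl
  | succ j ih =>
    intro h
    have h1 : ε (j + 1) = ε' (j + 1) := h _ le_rfl
    simp only [chainE, ih (fun i hi => h i (hi.trans j.le_succ)), h1]
/-- Claim M: Let homeomorphisms `v₁, …, v_n` of a Hausdorff space `X`
be given (the constants of a word `w`), let `O'` be open, and suppose
`q ∈ v_r^{ε_r}⋯v_1^{ε_1}(O')` avoids every member of the family
`V_w(cl(O') \ O') = { v_j^{δ_j}⋯v_1^{δ_1}(cl(O') \ O') }`. Then there is an open
neighbourhood `O ⊆ v_r^{ε_r}⋯v_1^{ε_1}(O')` of `q` such that every member `V` of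
`V_w(O')` meeting `O` contains `O`. -/
theorem stmt10 {X : Type*} [TopologicalSpace X] [T2Space X]
    (v : ℕ → X ≃ₜ X) (n r : ℕ) (hr : r ≤ n)
    (O' : Set X) (hO' : IsOpen O') (ε : ℕ → Bool) (q : X)
    (hq : q ∈ chainE v ε r '' O')
    (havoid : ∀ j, 1 ≤ j → j ≤ n → ∀ δ : ℕ → Bool,
      q ∉ chainE v δ j '' (closure O' \ O')) :
    ∃ O : Set X, IsOpen O ∧ q ∈ O ∧ O ⊆ chainE v ε r '' O' ∧
      ∀ j, 1 ≤ j → j ≤ n → ∀ δ : ℕ → Bool,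
        (O ∩ chainE v δ j '' O').Nonempty → O ⊆ chainE v δ j '' O' := by
  classical
  -- basic facts for any (j, δ)
  have hopen : ∀ (δ : ℕ → Bool) (j : ℕ), IsOpen (chainE v δ j '' O') := by
    intro δ j
    rw [chainE_eq]
    exact (chainH v δ j).isOpenMap _ hO'
  have hmem : ∀ (δ : ℕ → Bool) (j : ℕ), 1 ≤ j → j ≤ n →
      q ∈ closure (chainE v δ j '' O') → q ∈ chainE v δ j '' O' := by
    intro δ j h1 h2 hc
    by_contra hnot
    apply havoid j h1 h2 δ
    rw [chainE_eq] at *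
    rw [Set.image_diff (chainH v δ j).injective]
    refine ⟨?_, hnot⟩
    rw [(chainH v δ j).image_closure]; exact hc
  -- extension of a Fin-function
  set ext : (Fin (n+1) → Bool) → ℕ → Bool :=
    fun f k => if h : k < n + 1 then f ⟨k, h⟩ else false with hext
  -- neighbourhood pieces
  set T : ℕ → (Fin (n+1) → Bool) → Set X := fun j f =>
    if q ∈ chainE v (ext f) j '' O' then chainE v (ext f) j '' O'
    else (closure (chainE v (ext f) j '' O'))ᶜ with hT
  set O : Set X := (chainE v ε r '' O') ∩
    ⋂ j ∈ Finset.Icc 1 n, ⋂ f : Fin (n+1) → Bool, T j f with hO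
  have hTopen : ∀ j f, IsOpen (T j f) := by
    intro j f
    simp only [hT]
    split_ifs
    · exact hopen _ _
    · exact isClosed_closure.isOpen_compl
  have hOopen : IsOpen O := by
    apply (hopen ε r).inter
    apply isOpen_biInter_finset
    intro j _
    exact isOpen_iInter_of_finite fun f => hTopen j f
  have hqT : ∀ j, 1 ≤ j → j ≤ n → ∀ f, q ∈ T j f := by
    intro j h1 h2 f
    simp only [hT]
    split_ifs with h
    · exact h
    · exact fun hc => h (hmem _ j h1 h2 hc)
  have hqO : q ∈ O := by
    refine ⟨hq, ?_⟩
    simp only [Set.mem_iInter, Finset.mem_Icc]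
    intro j hj f
    exact hqT j hj.1 hj.2 f
  refine ⟨O, hOopen, hqO, fun x hx => hx.1, ?_⟩
  intro j h1 h2 δ hne
  have hkey : chainE v δ j = chainE v (ext (fun i => δ i)) j := by
    apply chainE_congr
    intro i hi
    have : i < n + 1 := Nat.lt_succ_of_le (hi.trans h2)
    simp [hext, this, Nat.lt_succ_iff.mp this]
  have hsub : O ⊆ T j (fun i => δ i) := by
    intro x hx
    have := hx.2
    simp only [Set.mem_iInter, Finset.mem_Icc] at this
    exact this j ⟨h1, h2⟩ (fun i => δ i)
  rw [hkey] at hne ⊢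
  simp only [hT] at hsub
  split_ifs at hsub with h
  · exact hsub
  · exfalso
    obtain ⟨x, hxO, hxV⟩ := hne
    exact hsub hxO (subset_closure hxV)
end

section
/- Let G act by homeomorphisms on a Hausdorff space X and let w(ȳ) ∈ F_t * G be a word in the form u_n v_n ⋯ u_1 v_1 with constants v_i ∈ G \ {1}. If w has non-trivial product of constants (v_n ⋯ v_1 ≠ 1), then w is oscillating: either w is explicitly oscillating, or the Transition procedure produces a non-empty family P^os of open sets on which derived words are explicitly oscillating. -/
section

variable (G X : Type*) [Group G] [MulAction G X]

/-- The support of `g` acting on `X`. -/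
def mSupp (g : G) : Set X := {x : X | g • x ≠ x}

/-- The set of points of `X` fixed by every element of `G`. -/
def fixSet : Set X := {x : X | ∀ g : G, g • x = x}

variable [TopologicalSpace X]

/-- `supp(g)⁰ = int(X \ (supp(g) ∪ Fix(G)))`. -/
def supp0 (g : G) : Set X := interior ((mSupp G X g ∪ fixSet G X)ᶜ)

/-- `O_w` for the word with list of constants `[v₁, …, v_n]` (first applied first):
`p ∈ O_w` iff each constant moves the current point along the trajectory, i.e.
`O_w = ⋂_{i} v₁⁻¹⋯v_i⁻¹(supp(v_{i+1}))`. -/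
def OwL : List G → Set X
  | [] => Set.univ
  | v :: rest => mSupp G X v ∩ (fun x : X => v • x) ⁻¹' OwL rest

/-- The region `X_{ε̄} = ⋂_i v₁⁻¹⋯v_{i-1}⁻¹(supp(v_i)^{ε_i})`, where
`supp(v)¹ = supp(v) \ Fix(G)` and `supp(v)⁰ = int(X \ (supp(v) ∪ Fix(G)))`. -/
def XepsL : List G → List Bool → Set X
  | [], _ => Set.univ
  | _ :: _, [] => Set.univ
  | v :: vs, e :: es =>
      (if e then mSupp G X v \ fixSet G X else supp0 G X v) ∩
        (fun x : X => v • x) ⁻¹' XepsL vs es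

/-- The list of constants kept by `ε̄` (those with `ε_i = 1`); the others are deleted
in the word `w'_{X_{ε̄}}` produced by the Transition procedure. -/
def keepL : List G → List Bool → List G
  | [], _ => []
  | _ :: _, [] => []
  | v :: vs, e :: es => if e then v :: keepL vs es else keepL vs es

/-- The word with constants `vs` is oscillating on the region `V`: either it is
explicitly oscillating in `V` (`V ∩ O_w ≠ ∅`), or some step of the Transition
procedure (restriction to a region `X_{ε̄}`, deletion of the constants with
`ε_i = 0`) leads to a word explicitly oscillating on a non-empty subregion. -/
inductive Osc : List G → Set X → Prop
  | expl (vs : List G) (V : Set X) :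
      vs ≠ [] → (V ∩ OwL G X vs).Nonempty → Osc vs V
  | step (vs : List G) (V : Set X) (ε : List Bool) :
      ε.length = vs.length → (V ∩ XepsL G X vs ε).Nonempty →
      Osc (keepL G vs ε) (V ∩ XepsL G X vs ε) → Osc vs V

end

section Aux

set_option linter.unusedSectionVars false

open Classical in
/-- The sign choice at `p`: keep `v` iff it moves the current point. -/
noncomputable def epsAt {G X : Type*} [Group G] [MulAction G X] : List G → X → List Bool
  | [], _ => []
  | v :: vs, p => (if v • p = p then false else true) :: epsAt vs (v • p)

/-- The "bad" set of points whose trajectory hits a support boundary. -/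
def BadL (G X : Type*) [Group G] [MulAction G X] [TopologicalSpace X] : List G → Set X
  | [] => ∅
  | v :: vs => (closure (mSupp G X v) \ mSupp G X v) ∪ (fun x : X => v • x) ⁻¹' BadL G X vs

variable {G X : Type*} [Group G] [MulAction G X] [TopologicalSpace X]

lemma keepL_cons_true (v : G) (vs : List G) (es : List Bool) :
    keepL G (v :: vs) (true :: es) = v :: keepL G vs es := by simp [keepL]

lemma keepL_cons_false (v : G) (vs : List G) (es : List Bool) :
    keepL G (v :: vs) (false :: es) = keepL G vs es := by simp [keepL]

lemma epsAt_cons (v : G) (vs : List G) (p : X) :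
    epsAt (v :: vs) p =
      (by classical exact if v • p = p then false else true) :: epsAt vs (v • p) := by
  simp [epsAt]

lemma XepsL_cons (v : G) (vs : List G) (e : Bool) (es : List Bool) :
    XepsL G X (v :: vs) (e :: es) =
      (if e then mSupp G X v \ fixSet G X else supp0 G X v) ∩
        (fun x : X => v • x) ⁻¹' XepsL G X vs es := rfl

lemma smul_not_fix {p : X} (h : p ∉ fixSet G X) (v : G) : v • p ∉ fixSet G X := by
  intro hf
  have h1 : p = v • p := by
    have h2 := hf v⁻¹
    rwa [inv_smul_smul] at h2
  exact h (by rw [h1]; exact hf)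

lemma reverse_prod_cons (v : G) (vs : List G) (p : X) :
    ((v :: vs).reverse.prod) • p = vs.reverse.prod • (v • p) := by
  simp [List.reverse_cons, List.prod_append, mul_smul]

lemma epsAt_length (vs : List G) (p : X) : (epsAt vs p).length = vs.length := by
  induction vs generalizing p with
  | nil => rfl
  | cons v vs ih => simp [epsAt, ih]

lemma keepL_length_le (vs : List G) (ε : List Bool) :
    (keepL G vs ε).length ≤ vs.length := by
  induction vs generalizing ε with
  | nil => simp [keepL]
  | cons v vs ih =>
      cases ε with
      | nil => simp [keepL]
      | cons e es =>
          cases e with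
          | false => rw [keepL_cons_false]; exact Nat.le_succ_of_le (ih es)
          | true => rw [keepL_cons_true]; exact Nat.succ_le_succ (ih es)

lemma keepL_prod_smul (vs : List G) (p : X) :
    ((keepL G vs (epsAt vs p)).reverse.prod) • p = (vs.reverse.prod) • p := by
  induction vs generalizing p with
  | nil => rfl
  | cons v vs ih =>
      rw [epsAt_cons]
      by_cases h : v • p = p
      · rw [if_pos h, keepL_cons_false, reverse_prod_cons, h, ih]
      · rw [if_neg h, keepL_cons_true, reverse_prod_cons, reverse_prod_cons, ih]

lemma keepL_length_lt (vs : List G) (p : X) (hp : p ∉ OwL G X vs) :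
    (keepL G vs (epsAt vs p)).length < vs.length := by
  induction vs generalizing p with
  | nil => exact absurd trivial hp
  | cons v vs ih =>
      rw [epsAt_cons]
      by_cases h : v • p = p
      · rw [if_pos h, keepL_cons_false]
        exact Nat.lt_succ_of_le (keepL_length_le vs _)
      · have hmem : p ∈ mSupp G X v := h
        have hp' : v • p ∉ OwL G X vs := fun hc => hp ⟨hmem, hc⟩
        rw [if_neg h, keepL_cons_true, List.length_cons, List.length_cons]
        exact Nat.succ_lt_succ (ih _ hp')

variable [T2Space X]

lemma mSupp_isOpen (hcont : ∀ g : G, Continuous fun x : X => g • x) (g : G) :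
    IsOpen (mSupp G X g) := by
  have h : mSupp G X g = (fun x : X => ((g • x : X), x)) ⁻¹' (Set.diagonal X)ᶜ := by
    ext x; simp [mSupp, Set.diagonal, eq_comm]
  rw [h]
  exact (isClosed_diagonal (X := X)).isOpen_compl.preimage
    ((hcont g).prodMk continuous_id)

lemma mem_XepsL (hcont : ∀ g : G, Continuous fun x : X => g • x)
    (hfixc : IsClosed (fixSet G X)) :
    ∀ (vs : List G) (p : X), p ∉ BadL G X vs → p ∉ fixSet G X →
      p ∈ XepsL G X vs (epsAt vs p) := by
  intro vs
  induction vs with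
  | nil => intro p _ _; trivial
  | cons v vs ih =>
      intro p hbad hfixp
      have hbad1 : p ∉ closure (mSupp G X v) \ mSupp G X v :=
        fun h => hbad (Or.inl h)
      have hbad2 : v • p ∉ BadL G X vs := fun h => hbad (Or.inr h)
      have hfix' : v • p ∉ fixSet G X := smul_not_fix hfixp v
      rw [epsAt_cons]
      by_cases h : v • p = p
      · rw [if_pos h, XepsL_cons]
        refine ⟨?_, ?_⟩
        · rw [if_neg (by simp : ¬ (false = true))]
          have hcl : p ∉ closure (mSupp G X v) := by
            intro hc
            exact hbad1 ⟨hc, fun hm => hm h⟩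
          have hsub : (closure (mSupp G X v))ᶜ ∩ (fixSet G X)ᶜ ⊆
              (mSupp G X v ∪ fixSet G X)ᶜ := by
            intro x hx hx'
            exact hx'.elim (fun h' => hx.1 (subset_closure h')) hx.2
          have hop : IsOpen ((closure (mSupp G X v))ᶜ ∩ (fixSet G X)ᶜ) :=
            (isClosed_closure.isOpen_compl).inter hfixc.isOpen_compl
          exact interior_maximal hsub hop ⟨hcl, hfixp⟩
        · show v • p ∈ XepsL G X vs (epsAt vs (v • p))
          exact ih (v • p) hbad2 hfix'
      · rw [if_neg h, XepsL_cons]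
        refine ⟨?_, ih (v • p) hbad2 hfix'⟩
        rw [if_pos rfl]
        exact ⟨h, hfixp⟩

lemma XepsL_isOpen (hcont : ∀ g : G, Continuous fun x : X => g • x)
    (hfixc : IsClosed (fixSet G X)) :
    ∀ (vs : List G) (ε : List Bool), IsOpen (XepsL G X vs ε) := by
  intro vs
  induction vs with
  | nil => intro ε; exact isOpen_univ
  | cons v vs ih =>
      intro ε
      cases ε with
      | nil => exact isOpen_univ
      | cons e es =>
          rw [XepsL_cons]
          refine IsOpen.inter ?_ ((ih es).preimage (hcont v))
          cases e with
          | true =>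
              rw [if_pos rfl]
              exact (mSupp_isOpen hcont v).sdiff hfixc
          | false =>
              rw [if_neg (by simp : ¬ (false = true))]
              exact isOpen_interior

/-- The action of `v` as a homeomorphism. -/
def actHomeo (hcont : ∀ g : G, Continuous fun x : X => g • x) (v : G) : X ≃ₜ X where
  toFun := fun x => v • x
  invFun := fun x => v⁻¹ • x
  left_inv := fun x => inv_smul_smul v x
  right_inv := fun x => smul_inv_smul v x
  continuous_toFun := hcont v
  continuous_invFun := hcont v⁻¹

lemma BadL_closed (hcont : ∀ g : G, Continuous fun x : X => g • x) :
    ∀ vs : List G, IsClosed (BadL G X vs) ∧ interior (BadL G X vs) = ∅ := by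
  intro vs
  induction vs with
  | nil => exact ⟨isClosed_empty, by simp [BadL]⟩
  | cons v vs ih =>
      have hA : IsClosed (closure (mSupp G X v) \ mSupp G X v) :=
        isClosed_closure.sdiff (mSupp_isOpen hcont v)
      have hAint : interior (closure (mSupp G X v) \ mSupp G X v) = ∅ := by
        by_contra hne
        obtain ⟨x, hx⟩ := Set.nonempty_iff_ne_empty.2 hne
        have hxcl : x ∈ closure (mSupp G X v) := (interior_subset hx).1
        have hU : interior (closure (mSupp G X v) \ mSupp G X v) ∈ nhds x :=
          isOpen_interior.mem_nhds hx
        obtain ⟨y, hy1, hy2⟩ := mem_closure_iff_nhds.1 hxcl _ hU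
        exact (interior_subset hy1).2 hy2
      have hBc : IsClosed ((fun x : X => v • x) ⁻¹' BadL G X vs) :=
        ih.1.preimage (hcont v)
      have hBint : interior ((fun x : X => v • x) ⁻¹' BadL G X vs) = ∅ := by
        have h1 : ((fun x : X => v • x) ⁻¹' BadL G X vs) =
            (actHomeo hcont v) ⁻¹' BadL G X vs := rfl
        rw [h1, ← Homeomorph.preimage_interior, ih.2, Set.preimage_empty]
      constructor
      · exact hA.union hBc
      · show interior (BadL G X (v :: vs)) = ∅
        have hBeq : BadL G X (v :: vs) =
            (closure (mSupp G X v) \ mSupp G X v) ∪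
              (fun x : X => v • x) ⁻¹' BadL G X vs := rfl
        rw [hBeq]
        set A := closure (mSupp G X v) \ mSupp G X v with hAdef
        set B := (fun x : X => v • x) ⁻¹' BadL G X vs with hBdef
        have hU : interior (A ∪ B) \ A ⊆ interior B := by
          apply interior_maximal ?_ (isOpen_interior.sdiff hA)
          intro x hx
          exact (interior_subset hx.1).resolve_left hx.2
        rw [hBint] at hU
        have h2 : interior (A ∪ B) ⊆ A := fun x hx => by
          by_contra hxA; exact hU ⟨hx, hxA⟩
        have h3 : interior (A ∪ B) ⊆ interior A := interior_maximal h2 isOpen_interior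
        rw [hAint] at h3
        exact Set.eq_empty_iff_forall_notMem.2 fun x hx => h3 hx

lemma nonempty_diff_of_closed {S B : Set X} (hS : IsOpen S) (hne : S.Nonempty)
    (hBint : interior B = ∅) : (S \ B).Nonempty := by
  by_contra h
  have hsub : S ⊆ B := fun x hx => by
    by_contra hxB; exact h ⟨x, hx, hxB⟩
  have h2 : S ⊆ interior B := interior_maximal hsub hS
  rw [hBint] at h2
  obtain ⟨x, hx⟩ := hne
  exact h2 hx

lemma stmt13_main {G X : Type*} [Group G] [MulAction G X] [TopologicalSpace X] [T2Space X]
    (hcont : ∀ g : G, Continuous fun x : X => g • x)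
    (hfix : (fixSet G X).Finite) :
    ∀ (n : ℕ) (vs : List G) (V : Set X), vs.length ≤ n → vs ≠ [] → IsOpen V →
      (V ∩ mSupp G X vs.reverse.prod).Nonempty → Osc G X vs V := by
  have hfixc : IsClosed (fixSet G X) := hfix.isClosed
  intro n
  induction n with
  | zero =>
      intro vs V hlen hne _ _
      exact absurd (List.length_eq_zero_iff.1 (Nat.le_zero.1 hlen)) hne
  | succ n ih =>
      intro vs V hlen hne hV hSne
      have hSopen : IsOpen (V ∩ mSupp G X vs.reverse.prod) :=
        hV.inter (mSupp_isOpen hcont _)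
      obtain ⟨p, hpS, hpB⟩ :=
        nonempty_diff_of_closed hSopen hSne (BadL_closed hcont vs).2
      have hpV : p ∈ V := hpS.1
      have hpmov : vs.reverse.prod • p ≠ p := hpS.2
      have hpfix : p ∉ fixSet G X := fun h => hpmov (h _)
      by_cases how : p ∈ OwL G X vs
      · exact Osc.expl vs V hne ⟨p, hpV, how⟩
      · set ε := epsAt vs p with hε
        have hpX : p ∈ XepsL G X vs ε := mem_XepsL hcont hfixc vs p hpB hpfix
        have hklt : (keepL G vs ε).length < vs.length := keepL_length_lt vs p how
        have hkprod : ((keepL G vs ε).reverse.prod) • p = (vs.reverse.prod) • p :=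
          keepL_prod_smul vs p
        have hkne : keepL G vs ε ≠ [] := by
          intro hk
          rw [hk] at hkprod
          simp only [List.reverse_nil, List.prod_nil, one_smul] at hkprod
          exact hpmov hkprod.symm
        refine Osc.step vs V ε (epsAt_length vs p) ⟨p, hpV, hpX⟩ ?_
        refine ih (keepL G vs ε) (V ∩ XepsL G X vs ε)
          (Nat.le_of_lt_succ (Nat.lt_of_lt_of_le hklt hlen)) hkne
          (hV.inter (XepsL_isOpen hcont hfixc vs ε)) ⟨p, ⟨hpV, hpX⟩, ?_⟩
        show (keepL G vs ε).reverse.prod • p ≠ p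
        rw [hkprod]; exact hpmov

end Aux

/-- Proposition 3.6: Let `G` act by homeomorphisms on a Hausdorff
space `X` (with finite fixed-point set, as assumed for the Transition procedure) and
let `w(ȳ) = u_n v_n ⋯ u_1 v_1` be a word with non-trivial constants
`vs = [v₁, …, v_n]`. If `w` has non-trivial product of constants, i.e. `v_n ⋯ v_1`
has non-empty support in `X`, then `w` is oscillating. -/
theorem stmt13 {G X : Type*} [Group G] [MulAction G X] [TopologicalSpace X] [T2Space X]
    (hcont : ∀ g : G, Continuous fun x : X => g • x)
    (hfix : (fixSet G X).Finite)
    (vs : List G) (hne : vs ≠ []) (hv : ∀ v ∈ vs, v ≠ 1)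
    (hprod : (mSupp G X vs.reverse.prod).Nonempty) :
    Osc G X vs Set.univ :=
  stmt13_main hcont hfix vs.length vs Set.univ le_rfl hne isOpen_univ
    (by simpa using hprod)
end

section
/- In Thompson's group F with its standard action on [0,1], the word w₁(y) = y x₁ y⁻¹ x₂ y² x₁⁻¹ is explicitly oscillating: the set O_{w₁} = x₁x₂⁻¹((1/2,1)) ∩ x₁((3/4,1)) ∩ (1/2,1) equals (5/8,1), which is non-empty. -/
open scoped Classical

/-- The standard generator `x_n` of Thompson's group `F` as a piecewise linear map
(extended to all of `ℝ` by its outermost linear pieces, so that it is a bijection of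
`ℝ` restricting to the usual generator on `[0,1]`). -/
noncomputable def xF (n : ℕ) (t : ℝ) : ℝ :=
  if t ≤ ((2 : ℝ) ^ n - 1) / 2 ^ n then t
  else if t ≤ ((2 : ℝ) ^ (n + 1) - 1) / 2 ^ (n + 1) then
    t / 2 + ((2 : ℝ) ^ n - 1) / 2 ^ (n + 1)
  else if t ≤ ((2 : ℝ) ^ (n + 2) - 1) / 2 ^ (n + 2) then t - 1 / 2 ^ (n + 2)
  else 2 * t - 1

private lemma x1img : ∀ y : ℝ, 3/4 < y → y < 1 → 5/8 < xF 1 y ∧ xF 1 y < 1 := by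
  intro y h1 h2
  unfold xF
  norm_num
  split_ifs <;> constructor <;> linarith

private lemma x2mem : ∀ y : ℝ, 1/2 < y → y < 1 → 1/2 < xF 2 y ∧ xF 2 y < 1 := by
  intro y h1 h2
  unfold xF
  norm_num
  split_ifs <;> constructor <;> linarith

private lemma x1inv : ∀ x : ℝ, 5/8 < x → x < 1 → ∃ y, 3/4 < y ∧ y < 1 ∧ xF 1 y = x := by
  intro x h1 h2
  by_cases h : x ≤ 3/4
  · refine ⟨x + 1/8, by linarith, by linarith, ?_⟩
    unfold xF; norm_num
    split_ifs <;> linarith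
  · refine ⟨(x + 1)/2, by linarith, by linarith, ?_⟩
    unfold xF; norm_num
    split_ifs <;> linarith

/-- in Thompson's group `F` acting on `[0,1]`, the word
`w₁(y) = y x₁ y⁻¹ x₂ y² x₁⁻¹` is explicitly oscillating: its oscillation set
`O_{w₁} = x₁x₂⁻¹((1/2,1)) ∩ x₁((3/4,1)) ∩ (1/2,1)` equals `(5/8,1)`, which is
non-empty. Here `supp(x₁) = (1/2,1)` and `supp(x₂) = (3/4,1)`, and `x₂⁻¹(A)` is the
preimage of `A` under `x₂`. -/
theorem stmt14 :
    (xF 1 '' (xF 2 ⁻¹' Set.Ioo (1 / 2 : ℝ) 1)) ∩ (xF 1 '' Set.Ioo (3 / 4 : ℝ) 1) ∩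
        Set.Ioo (1 / 2 : ℝ) 1
      = Set.Ioo (5 / 8 : ℝ) 1 ∧
    (Set.Ioo (5 / 8 : ℝ) 1).Nonempty := by
  constructor
  · ext x
    simp only [Set.mem_inter_iff, Set.mem_image, Set.mem_preimage, Set.mem_Ioo]
    constructor
    · rintro ⟨⟨-, y, ⟨hy1, hy2⟩, rfl⟩, -⟩
      exact x1img y hy1 hy2
    · rintro ⟨hx1, hx2⟩
      obtain ⟨y, hy1, hy2, rfl⟩ := x1inv x hx1 hx2
      exact ⟨⟨⟨y, x2mem y (by linarith) hy2, rfl⟩, ⟨y, ⟨hy1, hy2⟩, rfl⟩⟩,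
        by linarith [x1img y hy1 hy2] , (x1img y hy1 hy2).2⟩
  · exact ⟨3/4, by norm_num⟩
end

section
/- Lemma on transition (Lemma 3.7): Let G act by homeomorphisms on a Hausdorff space X and let w_X(ȳ) be a word with constants v_{X,1},…,v_{X,n}. Suppose U is an open set produced at step k of the Transition procedure, with associated word w_U(ȳ), and suppose ḡ ∈ G^t and p ∈ U satisfy w_U(ḡ)(p) ≠ p. If every g_i stabilizes setwise each set of the form v_{X,j}^{ε_j}⋯v_{X,1}^{ε_1}(U) for all choices (ε_1,…,ε_j) ∈ {0,1}^j, 1 ≤ j ≤ n, then w_X(ḡ) ≠ 1. -/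
section

variable {G X : Type*} [Group G] [MulAction G X] {t : ℕ}

/-- Evaluation at `ḡ` of a word with constants `w = u_n v_n ⋯ u_1 v_1`, encoded as the
list of blocks `[(u₁, v₁), …, (u_n, v_n)]` with `uᵢ ∈ F_t` and `vᵢ ∈ G`. -/
def evalWordC (g : Fin t → G) : List (FreeGroup (Fin t) × G) → G
  | [] => 1
  | (u, v) :: rest => evalWordC g rest * (FreeGroup.lift g) u * v

/-- Evaluation at `ḡ` of the derived word `w_{ε̄}` in which each constant `vᵢ` is
replaced by `vᵢ^{ε_i}` (`v¹ = v`, `v⁰ = 1`); reductions in `F_t * G` do not change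
this value. -/
def evalWordEps (g : Fin t → G) : List (FreeGroup (Fin t) × G) → List Bool → G
  | [], _ => 1
  | _ :: _, [] => 1
  | (u, v) :: rest, e :: es =>
      evalWordEps g rest es * (FreeGroup.lift g) u * (if e then v else 1)

/-- `condChain [v₁,…,v_j] [δ₁,…,δ_j]` is the map `v_j^{δ_j} ∘ ⋯ ∘ v_1^{δ_1}`. -/
def condChain : List G → List Bool → X → X
  | [], _, x => x
  | _ :: _, [], x => x
  | v :: vs, e :: es, x => condChain vs es ((if e then v else (1 : G)) • x)

end


open Pointwise in
lemma liftStab {G X : Type*} [Group G] [MulAction G X] {t : ℕ} (g : Fin t → G)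
    (S : Set X) (h : ∀ i, (fun x : X => g i • x) '' S = S) (w : FreeGroup (Fin t)) :
    (fun x : X => (FreeGroup.lift g) w • x) '' S = S := by
  have h' : ∀ i, g i ∈ MulAction.stabilizer G S := by
    intro i
    show g i • S = S
    rw [← Set.image_smul]
    exact h i
  have key : (FreeGroup.lift g) w ∈ MulAction.stabilizer G S := by
    induction w using FreeGroup.induction_on with
    | C1 => rw [map_one]; exact (MulAction.stabilizer G S).one_mem
    | of i => show (FreeGroup.lift g) (FreeGroup.of i) ∈ _; rw [FreeGroup.lift_apply_of]; exact h' i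
    | inv_of i ih => rw [map_inv]; exact (MulAction.stabilizer G S).inv_mem ih
    | mul a b ha hb => rw [map_mul]; exact (MulAction.stabilizer G S).mul_mem ha hb
  have hkey : (FreeGroup.lift g) w • S = S := key
  rw [Set.image_smul]
  exact hkey

lemma stmt16aux {G X : Type*} [Group G] [MulAction G X] [TopologicalSpace X] {t : ℕ} :
    ∀ (blocks : List (FreeGroup (Fin t) × G)) (ε : List Bool),
      ε.length = blocks.length → ∀ (g : Fin t → G) (S : Set X),
      S ⊆ XepsL G X (blocks.map Prod.snd) ε →
      (∀ (i : Fin t) (j : ℕ) (δ : List Bool),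
        (fun x : X => g i • x) '' (condChain ((blocks.map Prod.snd).take j) δ '' S) =
          condChain ((blocks.map Prod.snd).take j) δ '' S) →
      ∀ p ∈ S, evalWordC g blocks • p = evalWordEps g blocks ε • p := by
  intro blocks
  induction blocks with
  | nil => intro ε _ g S _ _ p _; simp [evalWordC, evalWordEps]
  | cons b rest ih =>
    obtain ⟨u, v⟩ := b
    intro ε hlen g S hsub hstab p hp
    match ε, hlen with
    | e :: es, hlen =>
      have hlen' : es.length = rest.length := by simpa using hlen
      -- on S, v acts as v^e
      have hfix : ∀ q ∈ S, v • q = (if e then v else 1) • q := by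
        intro q hq
        have h1 := (hsub hq).1
        cases e with
        | true => simp
        | false =>
          simp only [if_neg Bool.false_ne_true] at h1 ⊢
          have h2 : q ∈ (mSupp G X v ∪ fixSet G X)ᶜ := interior_subset h1
          have h3 : q ∉ mSupp G X v := fun hm => h2 (Or.inl hm)
          have : v • q = q := not_not.mp h3
          simp [this]
      set S' : Set X := (fun x : X => (if e then v else (1 : G)) • x) '' S with hS'
      have hS'2 : S' = (fun x : X => v • x) '' S := by
        rw [hS']
        exact Set.image_congr fun q hq => (hfix q hq).symm
      have hsub' : S' ⊆ XepsL G X (rest.map Prod.snd) es := by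
        rw [hS'2]
        rintro x ⟨q, hq, rfl⟩
        exact (hsub hq).2
      -- condChain images over S' are condChain images over S
      have hchain : ∀ (j : ℕ) (δ : List Bool),
          condChain ((rest.map Prod.snd).take j) δ '' S' =
            condChain ((((u, v) :: rest).map Prod.snd).take (j+1)) (e :: δ) '' S := by
        intro j δ
        have : (((u, v) :: rest).map Prod.snd).take (j+1) =
            v :: (rest.map Prod.snd).take j := by simp
        rw [this]
        rw [hS', ← Set.image_comp]
        rfl
      have hstab' : ∀ (i : Fin t) (j : ℕ) (δ : List Bool),
          (fun x : X => g i • x) '' (condChain ((rest.map Prod.snd).take j) δ '' S') =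
            condChain ((rest.map Prod.snd).take j) δ '' S' := by
        intro i j δ
        rw [hchain j δ]
        exact hstab i (j+1) (e :: δ)
      have hS'stab : ∀ i, (fun x : X => g i • x) '' S' = S' := by
        intro i
        have := hstab' i 0 []
        simpa [condChain] using this
      have hpmem : (if e then v else (1 : G)) • p ∈ S' := ⟨p, hp, rfl⟩
      have hp' : (FreeGroup.lift g) u • ((if e then v else (1 : G)) • p) ∈ S' := by
        rw [← liftStab g S' hS'stab u]
        exact ⟨_, hpmem, rfl⟩
      have hvp : v • p = (if e then v else (1 : G)) • p := hfix p hp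
      have := ih es hlen' g S' hsub' hstab'
        ((FreeGroup.lift g) u • ((if e then v else (1 : G)) • p)) hp'
      calc evalWordC g ((u, v) :: rest) • p
          = evalWordC g rest • ((FreeGroup.lift g) u • (v • p)) := by
            simp [evalWordC, mul_smul]
        _ = evalWordC g rest • ((FreeGroup.lift g) u • ((if e then v else (1:G)) • p)) := by
            rw [hvp]
        _ = evalWordEps g rest es • ((FreeGroup.lift g) u • ((if e then v else (1:G)) • p)) := this
        _ = evalWordEps g ((u, v) :: rest) (e :: es) • p := by
            simp [evalWordEps, mul_smul]

/-- Lemma 3.7: Let `G` act by homeomorphisms on a Hausdorff space `X`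
and let `w_X(ȳ)` be a word with constants `v₁, …, v_n`, encoded as blocks
`[(u₁, v₁), …, (u_n, v_n)]`. Let `U` be an open set produced by the Transition
procedure (so `U ⊆ X_{ε̄}` for the cumulative `ε̄`), with associated derived word
`w_U` (the word with each `vᵢ` replaced by `vᵢ^{ε_i}`), and suppose `ḡ ∈ G^t` and
`p ∈ U` satisfy `w_U(ḡ)(p) ≠ p`. If every `gᵢ` stabilizes setwise each set of the
form `v_j^{δ_j}⋯v_1^{δ_1}(U)` for all `(δ_1,…,δ_j) ∈ {0,1}^j`, then `w_X(ḡ) ≠ 1`. -/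
theorem stmt16 {G X : Type*} [Group G] [MulAction G X] [TopologicalSpace X] [T2Space X]
    (hcont : ∀ g : G, Continuous fun x : X => g • x)
    {t : ℕ} (blocks : List (FreeGroup (Fin t) × G))
    (hblocks : ∀ b ∈ blocks, b.2 ≠ 1)
    (ε : List Bool) (hlen : ε.length = blocks.length)
    (U : Set X) (hUopen : IsOpen U)
    (hU : U ⊆ XepsL G X (blocks.map Prod.snd) ε)
    (g : Fin t → G) (p : X) (hp : p ∈ U)
    (hstab : ∀ (i : Fin t) (j : ℕ) (δ : List Bool),
      (fun x : X => g i • x) '' (condChain ((blocks.map Prod.snd).take j) δ '' U) =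
        condChain ((blocks.map Prod.snd).take j) δ '' U)
    (hmove : evalWordEps g blocks ε • p ≠ p) :
    evalWordC g blocks ≠ 1 := by
  intro hone
  have := stmt16aux blocks ε hlen g U hU hstab p hp
  rw [hone] at this
  exact hmove (this.symm.trans (one_smul G p))
end
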